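/- Suppose F satisfies the class F₅ condition F(x,y,z) = -(θ*(ξ)/(2n))·{g(x,φy)η(z) + g(x,φz)η(y)} for a real scalar θ*(ξ) on an almost contact B-metric vector space. Then the Nijenhuis-type tensor N(x,y,z) = F(φx,y,z) - F(x,y,φz) + F(x,φy,ξ)η(z) - F(φy,x,z) + F(y,x,φz) - F(y,φx,ξ)η(z) vanishes identically. -/
import Mathlib


theorem stmt10 (V : Type*) [AddCommGroup V] [Module ℝ V]
    (φ : V →ₗ[ℝ] V) (ξ : V) (η : V →ₗ[ℝ] ℝ)
    (hφξ : φ ξ = 0) (hφ2 : ∀ x : V, φ (φ x) = -x + η x • ξ)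
    (hηφ : ∀ x : V, η (φ x) = 0) (hηξ : η ξ = 1)
    (g : V →ₗ[ℝ] V →ₗ[ℝ] ℝ) (hsym : ∀ x y : V, g x y = g y x)
    (hB : ∀ x y : V, g (φ x) (φ y) = - g x y + η x * η y)
    (n : ℕ) (θsξ : ℝ)
    (F : V → V → V → ℝ)
    (hF : ∀ x y z : V, F x y z =
      -(θsξ / (2 * n)) * (g x (φ y) * η z + g x (φ z) * η y))
    (N : V → V → V → ℝ)
    (hN : ∀ x y z : V, N x y z = F (φ x) y z - F x y (φ z) + F x (φ y) ξ * η z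
          - F (φ y) x z + F y x (φ z) - F y (φ x) ξ * η z) :
    ∀ x y z : V, N x y z = 0 := by
  intro x y z
  rw [hN]
  simp only [hF, hηφ, hφ2, hφξ, hηξ, hB, map_add, map_smul, map_neg, LinearMap.add_apply,
    LinearMap.smul_apply, LinearMap.neg_apply, smul_eq_mul]
  rw [hsym x y]
  ring
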